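/- For p, q > 1 and x ∈ (0,1), one has arcsin_{p,q}(x) < x·(1 - x^q)^{-1/(p(1+q))}. -/

import Mathlib

open Real Set

noncomputable def arcsinpq (p q x : ℝ) : ℝ :=
  ∫ t in (0:ℝ)..x, (1 - t ^ q) ^ (-1/p)

theorem stmt1 (p q x : ℝ) (hp : 1 < p) (hq : 1 < q) (hx : x ∈ Ioo (0:ℝ) 1) :
    arcsinpq p q x < x * (1 - x ^ q) ^ (-(1 / (p * (1 + q)))) := by
  obtain ⟨hx0, hx1⟩ := hx
  have hp0 : (0:ℝ) < p := lt_trans one_pos hp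
  have hq0 : (0:ℝ) < q := lt_trans one_pos hq
  have h1q : (0:ℝ) < 1 + q := by linarith
  set α : ℝ := 1 / (p * (1 + q)) with hα_def
  have hα : 0 < α := by positivity
  set s : ℝ := α * q with hs_def
  have hs0 : 0 < s := by positivity
  have hs1 : s < 1 := by
    rw [hs_def, hα_def]
    rw [div_mul_eq_mul_div, one_mul, div_lt_one (by positivity)]
    nlinarith
  have hsum : α + s = 1 / p := by
    rw [hs_def, hα_def]; field_simp
  -- positivity of 1 - t^q on [0, x]
  have hpos : ∀ t ∈ Icc (0:ℝ) x, 0 < 1 - t ^ q := by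
    intro t ht
    have h1 : t ^ q ≤ x ^ q := Real.rpow_le_rpow ht.1 ht.2 hq0.le
    have h2 : x ^ q < 1 := Real.rpow_lt_one hx0.le hx1 hq0
    linarith
  -- the comparison function and its derivative
  set G : ℝ → ℝ := fun t => t * (1 - t ^ q) ^ (-α) with hG_def
  set g : ℝ → ℝ := fun t =>
    (1 - t ^ q) ^ (-α) + t * (-(q * t ^ (q - 1)) * (-α) * (1 - t ^ q) ^ (-α - 1)) with hg_def
  have hderiv : ∀ t ∈ Icc (0:ℝ) x, HasDerivAt G (g t) t := by
    intro t ht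
    have h1t : 0 < 1 - t ^ q := hpos t ht
    have d1 : HasDerivAt (fun y : ℝ => y ^ q) (q * t ^ (q - 1)) t :=
      Real.hasDerivAt_rpow_const (Or.inr hq.le)
    have d2 : HasDerivAt (fun y : ℝ => 1 - y ^ q) (-(q * t ^ (q - 1))) t := by
      have := (hasDerivAt_const t (1:ℝ)).sub d1; simp only [zero_sub] at this; exact this
    have d3 : HasDerivAt (fun y : ℝ => (1 - y ^ q) ^ (-α))
        (-(q * t ^ (q - 1)) * (-α) * (1 - t ^ q) ^ (-α - 1)) t :=
      d2.rpow_const (Or.inl h1t.ne')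
    have d4 : HasDerivAt (fun y : ℝ => y * (1 - y ^ q) ^ (-α))
        (1 * (1 - t ^ q) ^ (-α) + t * (-(q * t ^ (q - 1)) * (-α) * (1 - t ^ q) ^ (-α - 1))) t :=
      (hasDerivAt_id' t).mul d3
    rw [one_mul] at d4; exact d4
  -- continuity / integrability
  have hcont_pow : Continuous fun t : ℝ => t ^ q :=
    continuous_iff_continuousAt.2 fun t => Real.continuousAt_rpow_const t q (Or.inr hq0.le)
  have hcont_base : Continuous fun t : ℝ => 1 - t ^ q := continuous_const.sub hcont_pow
  have hIcc : uIcc (0:ℝ) x = Icc 0 x := uIcc_of_le hx0.le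
  have hrc : ∀ c : ℝ, ContinuousOn (fun t : ℝ => (1 - t ^ q) ^ c) (Icc 0 x) := by
    intro c
    exact ContinuousOn.rpow_const hcont_base.continuousOn
      (fun t ht => Or.inl (hpos t ht).ne')
  have hint_f : IntervalIntegrable (fun t : ℝ => (1 - t ^ q) ^ (-1/p)) MeasureTheory.volume 0 x := by
    apply ContinuousOn.intervalIntegrable
    rw [hIcc]; exact hrc _
  have hint_g : IntervalIntegrable g MeasureTheory.volume 0 x := by
    apply ContinuousOn.intervalIntegrable
    rw [hIcc]
    apply (hrc (-α)).add
    apply continuousOn_id.mul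
    apply ContinuousOn.mul _ (hrc (-α - 1))
    exact (((continuous_const.mul
      (continuous_iff_continuousAt.2 fun t =>
        Real.continuousAt_rpow_const t (q-1) (Or.inr (by linarith)))).neg).mul
        continuous_const).continuousOn
  -- FTC
  have hFTC : ∫ t in (0:ℝ)..x, g t = G x - G 0 := by
    apply intervalIntegral.integral_eq_sub_of_hasDerivAt _ hint_g
    intro t ht
    exact hderiv t (hIcc ▸ ht)
  have hG0 : G 0 = 0 := by simp [hG_def]
  -- pointwise strict inequality on Ioo 0 x
  have hpt : ∀ t ∈ Ioo (0:ℝ) x, (1 - t ^ q) ^ (-1/p) < g t := by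
    intro t ht
    have ht0 : 0 < t := ht.1
    have htx : t < x := ht.2
    have h1t : 0 < 1 - t ^ q := hpos t ⟨ht0.le, htx.le⟩
    set u : ℝ := t ^ q with hu_def
    have hu0 : 0 < u := Real.rpow_pos_of_pos ht0 q
    have hu1 : u < 1 := by linarith
    -- Bernoulli: (1 - u) ^ (1 - s) < 1 - (1 - s) * u
    have hbern : (1 + -u) ^ (1 - s) < 1 + (1 - s) * -u := by
      exact rpow_one_add_lt_one_add_mul_self (by linarith) (by linarith)
        (by linarith) (by linarith)
    have hbern' : (1 - u) ^ (1 - s) < (1 - u) + s * u := by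
      rw [show (1:ℝ) + -u = 1 - u by ring] at hbern
      nlinarith [hbern]
    -- hence (1-u)^(-s) < 1 + s*u*(1-u)⁻¹
    have hstep : (1 - u) ^ (-s) < 1 + s * u * (1 - u)⁻¹ := by
      have h2 : (1 - u) ^ (-s) = (1 - u) ^ (1 - s) * (1 - u)⁻¹ := by
        rw [← Real.rpow_neg_one (1-u), ← Real.rpow_add h1t]; ring_nf
      rw [h2]
      have h3 : ((1 - u) + s * u) * (1 - u)⁻¹ = 1 + s * u * (1 - u)⁻¹ := by
        field_simp
      rw [← h3]
      exact mul_lt_mul_of_pos_right hbern' (by positivity)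
    -- assemble
    have ht_pow : t * t ^ (q - 1) = u := by
      rw [hu_def, ← Real.rpow_one_add' ht0.le (by linarith)]
      ring_nf
    have hgval : g t = (1 - u) ^ (-α) * (1 + s * u * (1 - u)⁻¹) := by
      rw [hg_def]
      simp only
      rw [← hu_def]
      have : t * (-(q * t ^ (q - 1)) * (-α) * (1 - u) ^ (-α - 1))
          = s * u * (1 - u) ^ (-α - 1) := by
        rw [hs_def, ← ht_pow]; ring
      rw [this]
      have h4 : (1 - u) ^ (-α - 1) = (1 - u) ^ (-α) * (1 - u)⁻¹ := by
        rw [← Real.rpow_neg_one (1-u), ← Real.rpow_add h1t]; ring_nf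
      rw [h4]; ring
    have hfval : (1 - u) ^ (-1/p) = (1 - u) ^ (-α) * (1 - u) ^ (-s) := by
      rw [← Real.rpow_add h1t]
      congr 1
      rw [show -α + -s = -(α + s) by ring, hsum]; ring
    rw [hgval, hfval]
    have hαpos : (0:ℝ) < (1 - u) ^ (-α) := Real.rpow_pos_of_pos h1t _
    exact mul_lt_mul_of_pos_left hstep hαpos
  -- conclude
  have hsub : 0 < ∫ t in (0:ℝ)..x, (g t - (1 - t ^ q) ^ (-1/p)) := by
    apply intervalIntegral.intervalIntegral_pos_of_pos_on (hint_g.sub hint_f)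
      (fun t ht => sub_pos.2 (hpt t ht)) hx0
  rw [intervalIntegral.integral_sub hint_g hint_f, hFTC, hG0, sub_zero] at hsub
  have : arcsinpq p q x < G x := by
    unfold arcsinpq; linarith
  simpa [hG_def, hα_def] using this
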